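/- Let f be a polynomial with complex coefficients, 0 < a < b, and let φ : (a, b) → ℝ be differentiable with Im f(s·exp(i φ(s))) = 0 for all s ∈ (a, b). Define α(s) = i·s·exp(i φ(s))·f′(s·exp(i φ(s))) and assume Im α(s) ≠ 0 for all s ∈ (a, b). Then for all s ∈ (a, b): φ′(s) = Re α(s) / (s·Im α(s)), and the function x(s) = Re f(s·exp(i φ(s))) is differentiable with x′(s) = |α(s)|² / (s·Im α(s)). -/

import Mathlib

open Set Complex Polynomial

theorem crossing_ode_in_r (f : Polynomial ℂ) (a b : ℝ) (ha : 0 < a) (hab : a < b)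
    (φ : ℝ → ℝ) (hφ : DifferentiableOn ℝ φ (Set.Ioo a b))
    (him : ∀ s ∈ Set.Ioo a b, (f.eval ((s : ℂ) * Complex.exp (Complex.I * φ s))).im = 0)
    (α : ℝ → ℂ)
    (hα : ∀ s : ℝ, α s = Complex.I * s * Complex.exp (Complex.I * φ s) *
        f.derivative.eval ((s : ℂ) * Complex.exp (Complex.I * φ s)))
    (hαim : ∀ s ∈ Set.Ioo a b, (α s).im ≠ 0) :
    ∀ s ∈ Set.Ioo a b,
      derivWithin φ (Set.Ioo a b) s = (α s).re / (s * (α s).im) ∧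
      DifferentiableWithinAt ℝ
        (fun u : ℝ => (f.eval ((u : ℂ) * Complex.exp (Complex.I * φ u))).re)
        (Set.Ioo a b) s ∧
      derivWithin (fun u : ℝ => (f.eval ((u : ℂ) * Complex.exp (Complex.I * φ u))).re)
        (Set.Ioo a b) s = (‖α s‖) ^ 2 / (s * (α s).im) := by
  intro s hs
  obtain ⟨hsa, hsb⟩ := hs
  have hs0 : (0:ℝ) < s := ha.trans hsa
  have hsne : (s:ℝ) ≠ 0 := ne_of_gt hs0
  set φ' := derivWithin φ (Set.Ioo a b) s with hφ'def
  have hφd : HasDerivWithinAt φ φ' (Set.Ioo a b) s :=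
    (hφ s ⟨hsa, hsb⟩).hasDerivWithinAt
  have h1 : HasDerivWithinAt (fun u : ℝ => ((φ u : ℂ))) (φ' : ℂ) (Set.Ioo a b) s := by
    simpa [Function.comp_def] using Complex.ofRealCLM.hasFDerivAt.comp_hasDerivWithinAt s hφd
  have h2 : HasDerivWithinAt (fun u : ℝ => Complex.I * (φ u : ℂ)) (Complex.I * φ')
      (Set.Ioo a b) s := h1.const_mul _
  have h3 : HasDerivWithinAt (fun u : ℝ => Complex.exp (Complex.I * (φ u : ℂ)))
      (Complex.exp (Complex.I * (φ s : ℂ)) * (Complex.I * φ')) (Set.Ioo a b) s := h2.cexp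
  have h4 : HasDerivWithinAt (fun u : ℝ => (u : ℂ)) 1 (Set.Ioo a b) s := by
    simpa using (hasDerivWithinAt_id s (Set.Ioo a b)).ofReal_comp
  have hψ : HasDerivWithinAt (fun u : ℝ => (u : ℂ) * Complex.exp (Complex.I * (φ u : ℂ)))
      (1 * Complex.exp (Complex.I * (φ s : ℂ)) +
        (s : ℂ) * (Complex.exp (Complex.I * (φ s : ℂ)) * (Complex.I * φ')))
      (Set.Ioo a b) s := h4.mul h3
  set z : ℂ := (s : ℂ) * Complex.exp (Complex.I * (φ s : ℂ)) with hz
  set D : ℂ := f.derivative.eval z *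
      (1 * Complex.exp (Complex.I * (φ s : ℂ)) +
        (s : ℂ) * (Complex.exp (Complex.I * (φ s : ℂ)) * (Complex.I * φ'))) with hD
  have hg : HasDerivWithinAt (fun u : ℝ => f.eval ((u : ℂ) * Complex.exp (Complex.I * (φ u : ℂ))))
      D (Set.Ioo a b) s := by have := (f.hasDerivAt z).comp_hasDerivWithinAt s hψ; exact this
  have hgim : HasDerivWithinAt
      (fun u : ℝ => (f.eval ((u : ℂ) * Complex.exp (Complex.I * (φ u : ℂ)))).im)
      D.im (Set.Ioo a b) s := by
    simpa [Function.comp_def] using Complex.imCLM.hasFDerivAt.comp_hasDerivWithinAt s hg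
  have hgre : HasDerivWithinAt
      (fun u : ℝ => (f.eval ((u : ℂ) * Complex.exp (Complex.I * (φ u : ℂ)))).re)
      D.re (Set.Ioo a b) s := by
    simpa [Function.comp_def] using Complex.reCLM.hasFDerivAt.comp_hasDerivWithinAt s hg
  have hU : UniqueDiffWithinAt ℝ (Set.Ioo a b) s := uniqueDiffOn_Ioo a b s ⟨hsa, hsb⟩
  have hDim : D.im = 0 := by
    have h0 : HasDerivWithinAt (fun _ : ℝ => (0:ℝ)) D.im (Set.Ioo a b) s :=
      hgim.congr (fun x hx => (him x hx).symm) (him s ⟨hsa, hsb⟩).symm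
    have := h0.derivWithin hU
    rw [← this]
    exact (hasDerivWithinAt_const s (Set.Ioo a b) (0:ℝ)).derivWithin hU
  -- algebra
  set p : ℝ := (Complex.exp (Complex.I * (φ s : ℂ)) * f.derivative.eval z).re with hp
  set q : ℝ := (Complex.exp (Complex.I * (φ s : ℂ)) * f.derivative.eval z).im with hq
  have hαre : (α s).re = -(s * q) := by
    rw [hα s]; simp [hq, Complex.mul_im, Complex.mul_re]; ring
  have hαim' : (α s).im = s * p := by
    rw [hα s]; simp [hp, Complex.mul_im, Complex.mul_re]; ring
  have hpne : p ≠ 0 := by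
    intro h
    exact hαim s ⟨hsa, hsb⟩ (by rw [hαim', h, mul_zero])
  have hDim' : q + s * φ' * p = 0 := by
    have : D.im = q + s * φ' * p := by
      rw [hD]
      simp [hp, hq, Complex.mul_im, Complex.mul_re, Complex.add_im, Complex.add_re]
      ring
    linarith [hDim, this]
  have hφ'eq : φ' = (α s).re / (s * (α s).im) := by
    rw [hαre, hαim']
    field_simp
    nlinarith [hDim']
  refine ⟨hφ'eq, hgre.differentiableWithinAt, ?_⟩
  have hDre : D.re = p - s * φ' * q := by
    rw [hD]
    simp [hp, hq, Complex.mul_im, Complex.mul_re, Complex.add_im, Complex.add_re]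
    ring
  rw [hgre.derivWithin hU, hDre]
  have habs : (‖α s‖) ^ 2 = (s*q)^2 + (s*p)^2 := by
    rw [Complex.sq_norm, Complex.normSq_apply, hαre, hαim']; ring
  rw [habs, hαim']
  have hφ'2 : φ' = -q / (s * p) := by
    field_simp at hφ'eq ⊢
    nlinarith [hDim']
  rw [hφ'2]
  field_simp
  ring
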